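/- (Gauss–Lucas theorem) If p is a nonconstant polynomial with complex coefficients, then every root of the derivative p' lies in the convex hull of the set of roots of p. -/
import Mathlib

open Polynomial

/-- Gauss–Lucas theorem: every root of the derivative of a nonconstant complex
polynomial lies in the convex hull of the set of roots of the polynomial. -/
theorem gauss_lucas (p : Polynomial ℂ) (hp : 0 < p.degree)
    (z : ℂ) (hz : p.derivative.IsRoot z) :
    z ∈ convexHull ℝ (↑p.roots.toFinset : Set ℂ) := by
  classical
  have hp0 : p ≠ 0 := fun h => by simp [h] at hp
  have hcard : Multiset.card p.roots = p.natDegree :=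
    (splits_iff_card_roots).mp (IsAlgClosed.splits p)
  by_cases hpz : p.IsRoot z
  · exact subset_convexHull ℝ _ (by
      simp only [Finset.coe_sort_coe, Multiset.mem_toFinset, Finset.mem_coe]
      exact (mem_roots hp0).mpr hpz)
  -- Now p z ≠ 0.
  set M := p.roots with hM
  have hfac : C p.leadingCoeff * (M.map fun r => X - C r).prod = p :=
    C_leadingCoeff_mul_prod_multiset_X_sub_C hcard
  have hzr : ∀ r ∈ M, z - r ≠ 0 := by
    intro r hr h
    apply hpz
    have : r = z := by linear_combination -h
    rw [← this]
    exact isRoot_of_mem_roots hr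
  have hlc : p.leadingCoeff ≠ 0 := leadingCoeff_ne_zero.mpr hp0
  set P : ℂ := (M.map fun r => z - r).prod with hP
  have hPne : P ≠ 0 := by
    rw [hP]
    exact Multiset.prod_ne_zero (by
      simp only [Multiset.mem_map]
      rintro ⟨r, hr, h⟩
      exact hzr r hr h)
  -- derivative evaluated at z
  have h1 : derivative p = C p.leadingCoeff * derivative (M.map fun r => X - C r).prod := by
    nth_rewrite 1 [← hfac]
    rw [derivative_mul, derivative_C, zero_mul, zero_add]
  have h2 : eval z (derivative p) = 0 := hz
  rw [h1, derivative_prod] at h2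
  simp only [derivative_X_sub_C, mul_one] at h2
  have hes : ∀ s : Multiset ℂ[X], eval z s.sum = (s.map (eval z)).sum :=
    fun s => map_multiset_sum (evalRingHom z) s
  rw [eval_mul, eval_C, hes, Multiset.map_map] at h2
  have hder : p.leadingCoeff *
      (M.map fun r => ((M.erase r).map fun s => z - s).prod).sum = 0 := by
    rw [← h2]
    congr 1
    apply congrArg
    apply Multiset.map_congr rfl
    intro r _
    simp [eval_multiset_prod, Multiset.map_map, Function.comp]
  -- each inner product equals P * (z - r)⁻¹
  have hinner : ∀ r ∈ M, ((M.erase r).map fun s => z - s).prod = P * (z - r)⁻¹ := by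
    intro r hr
    have hPe : P = (z - r) * ((M.erase r).map fun s => z - s).prod := by
      rw [hP]
      conv_lhs => rw [← Multiset.cons_erase hr]
      rw [Multiset.map_cons, Multiset.prod_cons]
    rw [hPe, mul_comm (z - r), mul_assoc, mul_inv_cancel₀ (hzr r hr), mul_one]
  have hsum0 : (M.map fun r => (z - r)⁻¹).sum = 0 := by
    have hkey : (M.map fun r => ((M.erase r).map fun s => z - s).prod).sum
        = P * (M.map fun r => (z - r)⁻¹).sum := by
      rw [← Multiset.sum_map_mul_left]
      apply congrArg
      exact Multiset.map_congr rfl hinner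
    rw [hkey] at hder
    rcases mul_eq_zero.mp hder with h | h
    · exact absurd h hlc
    · exact (mul_eq_zero.mp h).resolve_left hPne
  -- take conjugate: sum of (z - r) / ‖z-r‖² = 0
  have hconj : (M.map fun r => ((Complex.normSq (z - r))⁻¹ : ℝ) • (z - r)).sum = 0 := by
    have hc := congrArg (starRingEnd ℂ) hsum0
    rw [map_multiset_sum, Multiset.map_map, map_zero] at hc
    rw [← hc]
    apply congrArg
    apply Multiset.map_congr rfl
    intro r _
    simp only [Function.comp_apply]
    rw [map_inv₀, Complex.inv_def, Complex.conj_conj, Complex.normSq_conj,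
      Complex.real_smul, mul_comm, Complex.ofReal_inv]
  -- convert to a finset sum
  set t := M.toFinset with ht
  set w : ℂ → ℝ := fun r => (M.count r : ℝ) * (Complex.normSq (z - r))⁻¹ with hw
  have hfin : ∑ r ∈ t, w r • (z - r) = 0 := by
    rw [← hconj, Finset.sum_multiset_map_count]
    apply Finset.sum_congr rfl
    intro r _
    rw [hw, mul_smul, ← Nat.cast_smul_eq_nsmul ℝ]
  have hwpos : ∀ r ∈ t, 0 < w r := by
    intro r hr
    rw [ht, Multiset.mem_toFinset] at hr
    apply mul_pos
    · exact_mod_cast Multiset.count_pos.mpr hr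
    · exact inv_pos.mpr (Complex.normSq_pos.mpr (hzr r hr))
  have hMne : M ≠ 0 := by
    apply Multiset.card_pos.mp
    rw [hcard]
    exact natDegree_pos_iff_degree_pos.mpr hp
  have htne : t.Nonempty := by
    obtain ⟨r, hr⟩ := Multiset.exists_mem_of_ne_zero hMne
    exact ⟨r, Multiset.mem_toFinset.mpr hr⟩
  set W : ℝ := ∑ r ∈ t, w r with hW
  have hWpos : 0 < W := Finset.sum_pos hwpos htne
  have hzsum : ∑ r ∈ t, w r • r = W • z := by
    have hsplit : ∑ r ∈ t, w r • (z - r) = (∑ r ∈ t, w r • z) - ∑ r ∈ t, w r • r := by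
      rw [← Finset.sum_sub_distrib]
      exact Finset.sum_congr rfl fun r _ => smul_sub _ _ _
    rw [hsplit, ← Finset.sum_smul, ← hW] at hfin
    exact (sub_eq_zero.mp hfin).symm
  have hcm : t.centerMass w id = z := by
    rw [Finset.centerMass]
    simp only [id]
    rw [hzsum, smul_smul, inv_mul_cancel₀ hWpos.ne', one_smul]
  rw [← hcm]
  exact Finset.centerMass_mem_convexHull t (fun r hr => (hwpos r hr).le) hWpos
    (fun r hr => by simpa using hr)
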